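/- For any finite poset P, the minimum number of colors in a chain-proper coloring of P that is also distinguishing equals the width of P. -/

import Mathlib

/-- A coloring `c` of a poset is distinguishing if the only color-preserving
order-automorphism is the identity. -/
def IsDistinguishing {α : Type*} [PartialOrder α] {C : Type*} (c : α → C) : Prop :=
  ∀ φ : α ≃o α, (∀ x, c (φ x) = c x) → ∀ x, φ x = x

/-- The least number of colors in a chain-proper (each color class is a chain)
distinguishing coloring of a poset. -/
noncomputable def chainChiD (α : Type*) [PartialOrder α] : ℕ :=
  sInf {k | ∃ c : α → Fin k, (∀ x y : α, c x = c y → x ≤ y ∨ y ≤ x) ∧ IsDistinguishing c}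

/-- The width of a finite poset: the maximum size of an antichain. -/
noncomputable def posetWidth (α : Type*) [PartialOrder α] [Fintype α] : ℕ :=
  sSup {k | ∃ S : Finset α, IsAntichain (· ≤ ·) (S : Set α) ∧ S.card = k}

section Aux

variable {α : Type*} [PartialOrder α]

open Classical in
/-- Width of a finite subposet given by a finset. -/
noncomputable def wS (S : Finset α) : ℕ :=
  (S.powerset.filter (fun T : Finset α => IsAntichain (· ≤ ·) (T : Set α))).sup Finset.card

lemma antichain_card_le {S T : Finset α} (hTS : T ⊆ S)
    (hT : IsAntichain (· ≤ ·) (T : Set α)) : T.card ≤ wS S := by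
  classical
  apply Finset.le_sup (f := Finset.card)
  simp [Finset.mem_filter, Finset.mem_powerset, hTS, hT]

lemma exists_max_antichain (S : Finset α) :
    ∃ T, T ⊆ S ∧ IsAntichain (· ≤ ·) (T : Set α) ∧ T.card = wS S := by
  classical
  have hne : (S.powerset.filter fun T : Finset α => IsAntichain (· ≤ ·) (T : Set α)).Nonempty := by
    refine ⟨∅, ?_⟩
    simp [Finset.mem_filter, IsAntichain, Set.Pairwise]
  obtain ⟨T, hT, hTc⟩ := Finset.exists_mem_eq_sup _ hne Finset.card
  simp only [Finset.mem_filter, Finset.mem_powerset] at hT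
  exact ⟨T, hT.1, hT.2, hTc.symm⟩

lemma wS_mono {S T : Finset α} (h : S ⊆ T) : wS S ≤ wS T := by
  classical
  exact Finset.sup_mono (Finset.filter_subset_filter _ (Finset.powerset_mono.2 h))

lemma antichain_colors {S : Finset α} {c : α → ℕ} {k : ℕ}
    (hch : ∀ x ∈ S, ∀ y ∈ S, c x = c y → x ≤ y ∨ y ≤ x)
    (hlt : ∀ x ∈ S, c x < k)
    {B : Finset α} (hBS : B ⊆ S) (hB : IsAntichain (· ≤ ·) (B : Set α))
    (hcard : B.card = k) {i : ℕ} (hi : i < k) : ∃ b ∈ B, c b = i := by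
  classical
  have hinj : Set.InjOn c (B : Set α) := by
    intro x hx y hy hxy
    by_contra hne
    rcases hch x (hBS hx) y (hBS hy) hxy with h | h
    · exact hB hx hy hne h
    · exact hB hy hx (Ne.symm hne) h
  have hsub : B.image c ⊆ Finset.range k := by
    intro j hj
    obtain ⟨b, hb, rfl⟩ := Finset.mem_image.1 hj
    exact Finset.mem_range.2 (hlt b (hBS hb))
  have hcards : (Finset.range k).card ≤ (B.image c).card := by
    rw [Finset.card_image_of_injOn hinj, hcard, Finset.card_range]
  have heq := Finset.eq_of_subset_of_card_le hsub hcards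
  have : i ∈ B.image c := by
    rw [heq]; exact Finset.mem_range.2 hi
  obtain ⟨b, hb, hbc⟩ := Finset.mem_image.1 this
  exact ⟨b, hb, hbc⟩

/-- Dilworth's theorem, in coloring form. -/
lemma dilworth (S : Finset α) : ∃ c : α → ℕ, (∀ x ∈ S, c x < wS S) ∧
    (∀ x ∈ S, ∀ y ∈ S, c x = c y → x ≤ y ∨ y ≤ x) := by
  classical
  induction S using Finset.strongInduction with
  | _ S IH =>
  rcases S.eq_empty_or_nonempty with rfl | hne
  · exact ⟨fun _ => 0, by simp, by simp⟩
  obtain ⟨a, haS, hamax⟩ := S.exists_maximal hne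
  set S' := S.erase a with hS'def
  have hS'S : S' ⊂ S := Finset.erase_ssubset haS
  obtain ⟨c', hc'lt, hc'chain⟩ := IH S' hS'S
  set k := wS S' with hkdef
  -- the predicate "x is in the color-i class and lies in some k-antichain of S'"
  set P : ℕ → α → Prop := fun i x => x ∈ S' ∧ c' x = i ∧
    ∃ B, B ⊆ S' ∧ IsAntichain (· ≤ ·) (B : Set α) ∧ B.card = k ∧ x ∈ B with hPdef
  have hA : ∀ i, ∃ m, i < k → (P i m ∧ ∀ x, P i x → x ≤ m) := by
    intro i
    by_cases hi : i < k
    · obtain ⟨B, hBS, hBa, hBc⟩ := exists_max_antichain S'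
      obtain ⟨b, hbB, hbc⟩ := antichain_colors hc'chain hc'lt hBS hBa hBc hi
      set M : Finset α := S'.filter (fun x => P i x) with hM
      have hbM : b ∈ M := Finset.mem_filter.2 ⟨hBS hbB, hBS hbB, hbc, B, hBS, hBa, hBc, hbB⟩
      obtain ⟨m, hmM, hmmax⟩ := M.exists_maximal ⟨b, hbM⟩
      have hmP : P i m := (Finset.mem_filter.1 hmM).2
      refine ⟨m, fun _ => ⟨hmP, ?_⟩⟩
      intro x hx
      have hxM : x ∈ M := Finset.mem_filter.2 ⟨hx.1, hx⟩
      rcases hc'chain x hx.1 m hmP.1 (hx.2.1.trans hmP.2.1.symm) with h | h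
      · exact h
      · rcases eq_or_lt_of_le h with h' | h'
        · exact le_of_eq h'.symm
        · exact absurd (le_antisymm h'.le (hmmax hxM h'.le)) h'.ne
    · exact ⟨a, fun h => absurd h hi⟩
  choose g hg using hA
  by_cases hcase : ∃ i, i < k ∧ g i ≤ a
  · -- some chain-top lies below a: shrink
    obtain ⟨i, hik, hga⟩ := hcase
    have hPm : P i (g i) := (hg i hik).1
    have hmax : ∀ x, P i x → x ≤ g i := (hg i hik).2
    set K : Finset α := insert a (S'.filter (fun x => c' x = i ∧ x ≤ g i)) with hKdef
    have hKchain : ∀ x ∈ K, ∀ y ∈ K, x ≤ y ∨ y ≤ x := by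
      intro x hx y hy
      simp only [hKdef, Finset.mem_insert, Finset.mem_filter] at hx hy
      rcases hx with rfl | ⟨hxS, hxc, hxm⟩
      · rcases hy with rfl | ⟨hyS, hyc, hym⟩
        · exact Or.inl le_rfl
        · exact Or.inr (hym.trans hga)
      · rcases hy with rfl | ⟨hyS, hyc, hym⟩
        · exact Or.inl (hxm.trans hga)
        · exact hc'chain x hxS y hyS (hxc.trans hyc.symm)
    set T : Finset α := S \ K with hTdef
    have haK : a ∈ K := Finset.mem_insert_self _ _
    have hTS : T ⊂ S := by
      refine Finset.ssubset_iff_of_subset (Finset.sdiff_subset) |>.2 ⟨a, haS, ?_⟩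
      simp [hTdef, haK]
    have hTS' : T ⊆ S' := by
      intro x hx
      rw [Finset.mem_sdiff] at hx
      refine Finset.mem_erase.2 ⟨?_, hx.1⟩
      rintro rfl; exact hx.2 haK
    obtain ⟨cT, hcTlt, hcTchain⟩ := IH T hTS
    have hwT : wS T < k := by
      by_contra h
      push_neg at h
      obtain ⟨B, hBS, hBa, hBc⟩ := exists_max_antichain T
      obtain ⟨B', hB'B, hB'c⟩ := Finset.exists_subset_card_eq (s := B) (n := k) (hBc ▸ h)
      have hB'a : IsAntichain (· ≤ ·) (B' : Set α) := hBa.subset (Finset.coe_subset.2 hB'B)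
      have hB'T : B' ⊆ T := hB'B.trans hBS
      obtain ⟨b, hbB', hbc⟩ := antichain_colors hc'chain hc'lt (hB'T.trans hTS') hB'a hB'c hik
      have hbP : P i b := ⟨hTS' (hB'T hbB'), hbc, B', hB'T.trans hTS', hB'a, hB'c, hbB'⟩
      have hbK : b ∈ K := by
        simp only [hKdef, Finset.mem_insert, Finset.mem_filter]
        exact Or.inr ⟨hbP.1, hbc, hmax b hbP⟩
      have := Finset.mem_sdiff.1 (hB'T hbB')
      exact this.2 hbK
    have hk1 : 1 ≤ k := Nat.one_le_of_lt (Nat.lt_of_le_of_lt (Nat.zero_le i) hik)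
    have hwS_ge : k ≤ wS S := wS_mono (Finset.erase_subset a S)
    have hwS_le : wS S ≤ k := by
      obtain ⟨B, hBS, hBa, hBc⟩ := exists_max_antichain S
      rw [← hBc]
      by_contra h
      push_neg at h
      by_cases haB : a ∈ B
      · have hB'S' : B.erase a ⊆ S' := Finset.erase_subset_erase a hBS
        have hcard' : k ≤ (B.erase a).card := by
          have := Finset.pred_card_le_card_erase (s := B) (a := a)
          omega
        obtain ⟨B', hB'B, hB'c⟩ := Finset.exists_subset_card_eq hcard'
        have hB'a : IsAntichain (· ≤ ·) (B' : Set α) :=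
          hBa.subset (Finset.coe_subset.2 (hB'B.trans (Finset.erase_subset a B)))
        obtain ⟨b, hbB', hbc⟩ :=
          antichain_colors hc'chain hc'lt (hB'B.trans hB'S') hB'a hB'c hik
        have hbP : P i b := ⟨hB'S' (hB'B hbB'), hbc, B', hB'B.trans hB'S', hB'a, hB'c, hbB'⟩
        have hba : b ≤ a := (hmax b hbP).trans hga
        have hbB : b ∈ B := (Finset.erase_subset a B) (hB'B hbB')
        have hbne : b ≠ a := Finset.ne_of_mem_erase (hB'B hbB')
        exact hBa (Finset.mem_coe.2 hbB) (Finset.mem_coe.2 haB) hbne hba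
      · have : B ⊆ S' := fun x hx => Finset.mem_erase.2 ⟨fun h' => haB (h' ▸ hx), hBS hx⟩
        exact absurd (antichain_card_le this hBa) (by omega)
    have hwS : wS S = k := le_antisymm hwS_le hwS_ge
    refine ⟨fun x => if x ∈ K then k - 1 else cT x, ?_, ?_⟩
    · intro x hx
      by_cases hxK : x ∈ K
      · simp only [hxK, if_pos]; omega
      · have hxT : x ∈ T := Finset.mem_sdiff.2 ⟨hx, hxK⟩
        simp only [hxK, if_neg, not_false_iff]
        have := hcTlt x hxT
        omega
    · intro x hx y hy hcxy
      by_cases hxK : x ∈ K <;> by_cases hyK : y ∈ K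
      · exact hKchain x hxK y hyK
      · exfalso
        have hyT : y ∈ T := Finset.mem_sdiff.2 ⟨hy, hyK⟩
        have := hcTlt y hyT
        simp only [hxK, if_pos, hyK, if_neg, not_false_iff] at hcxy
        omega
      · exfalso
        have hxT : x ∈ T := Finset.mem_sdiff.2 ⟨hx, hxK⟩
        have := hcTlt x hxT
        simp only [hxK, if_neg, not_false_iff, hyK, if_pos] at hcxy
        omega
      · have hxT : x ∈ T := Finset.mem_sdiff.2 ⟨hx, hxK⟩
        have hyT : y ∈ T := Finset.mem_sdiff.2 ⟨hy, hyK⟩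
        simp only [hxK, hyK, if_neg, not_false_iff] at hcxy
        exact hcTchain x hxT y hyT hcxy
  · -- no chain-top lies below a: a extends every maximum antichain
    push_neg at hcase
    have hgP : ∀ i, i < k → P i (g i) := fun i h => (hg i h).1
    have hgmax : ∀ i, i < k → ∀ x, P i x → x ≤ g i := fun i h => (hg i h).2
    set A : Finset α := insert a ((Finset.range k).image g) with hAdef
    have haim : a ∉ (Finset.range k).image g := by
      intro h
      obtain ⟨i, hi, hgi⟩ := Finset.mem_image.1 h
      have := (hgP i (Finset.mem_range.1 hi)).1
      rw [hgi] at this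
      exact (Finset.mem_erase.1 this).1 rfl
    have hinj : Set.InjOn g (Finset.range k : Set ℕ) := by
      intro i hi j hj hij
      have hi' : i < k := by simpa using hi
      have hj' : j < k := by simpa using hj
      have := (hgP i hi').2.1
      rw [hij, (hgP j hj').2.1] at this
      exact this.symm
    have hcardim : ((Finset.range k).image g).card = k := by
      rw [Finset.card_image_of_injOn hinj, Finset.card_range]
    have hAa : IsAntichain (· ≤ ·) (A : Set α) := by
      intro x hx y hy hxy hle
      simp only [hAdef, Finset.coe_insert, Set.mem_insert_iff, Finset.coe_image,
        Set.mem_image, Finset.mem_coe, Finset.mem_range] at hx hy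
      rcases hx with rfl | ⟨i, hi, rfl⟩
      · rcases hy with rfl | ⟨j, hj, rfl⟩
        · exact hxy rfl
        · have hgjS : g j ∈ S := Finset.mem_of_mem_erase (hgP j hj).1
          exact (lt_of_le_of_ne hle hxy).ne (le_antisymm hle (hamax hgjS hle))
      · rcases hy with rfl | ⟨j, hj, rfl⟩
        · exact hcase i hi hle
        · obtain ⟨B, hBS, hBa, hBc, hgjB⟩ := (hgP j hj).2.2
          obtain ⟨b, hbB, hbc⟩ := antichain_colors hc'chain hc'lt hBS hBa hBc hi
          have hbP : P i b := ⟨hBS hbB, hbc, B, hBS, hBa, hBc, hbB⟩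
          have hble : b ≤ g j := (hgmax i hi b hbP).trans hle
          have hbne : b ≠ g j := by
            intro h
            rw [h, (hgP j hj).2.1] at hbc
            have hine : i ≠ j := by
              intro h'; exact hxy (by rw [h'])
            exact hine hbc.symm
          exact hBa (Finset.mem_coe.2 hbB) (Finset.mem_coe.2 hgjB) hbne hble
    have hAcard : A.card = k + 1 := by
      rw [hAdef, Finset.card_insert_of_notMem haim, hcardim]
    have hAS : A ⊆ S := by
      rw [hAdef]
      refine Finset.insert_subset haS ?_
      intro x hx
      obtain ⟨i, hi, rfl⟩ := Finset.mem_image.1 hx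
      exact Finset.mem_of_mem_erase (hgP i (Finset.mem_range.1 hi)).1
    have hge : k + 1 ≤ wS S := hAcard ▸ antichain_card_le hAS hAa
    have hle : wS S ≤ k + 1 := by
      obtain ⟨B, hBS, hBa, hBc⟩ := exists_max_antichain S
      rw [← hBc]
      have h1 : B.erase a ⊆ S' := Finset.erase_subset_erase a hBS
      have h2 : (B.erase a).card ≤ k :=
        antichain_card_le h1 (hBa.subset (Finset.coe_subset.2 (Finset.erase_subset a B)))
      have := Finset.pred_card_le_card_erase (s := B) (a := a)
      omega
    have hwS : wS S = k + 1 := le_antisymm hle hge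
    refine ⟨fun x => if x = a then k else c' x, ?_, ?_⟩
    · intro x hx
      by_cases hxa : x = a
      · simp only [hxa, if_pos]; omega
      · simp only [hxa, if_neg, not_false_iff]
        have := hc'lt x (Finset.mem_erase.2 ⟨hxa, hx⟩)
        omega
    · intro x hx y hy hcxy
      by_cases hxa : x = a <;> by_cases hya : y = a
      · subst hxa; subst hya; exact Or.inl le_rfl
      · exfalso
        have := hc'lt y (Finset.mem_erase.2 ⟨hya, hy⟩)
        simp only [hxa, if_pos, hya, if_neg, not_false_iff] at hcxy
        omega
      · exfalso
        have := hc'lt x (Finset.mem_erase.2 ⟨hxa, hx⟩)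
        simp only [hxa, if_neg, not_false_iff, hya, if_pos] at hcxy
        omega
      · simp only [hxa, hya, if_neg, not_false_iff] at hcxy
        exact hc'chain x (Finset.mem_erase.2 ⟨hxa, hx⟩) y (Finset.mem_erase.2 ⟨hya, hy⟩) hcxy

lemma posetWidth_eq_wS (α : Type*) [PartialOrder α] [Fintype α] :
    posetWidth α = wS (Finset.univ : Finset α) := by
  classical
  unfold posetWidth
  apply le_antisymm
  · apply csSup_le
    · exact ⟨0, ∅, by simp [IsAntichain, Set.Pairwise], rfl⟩
    · rintro k ⟨T, hT, rfl⟩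
      exact antichain_card_le (Finset.subset_univ T) hT
  · apply le_csSup
    · refine ⟨wS (Finset.univ : Finset α), ?_⟩
      rintro k ⟨T, hT, rfl⟩
      exact antichain_card_le (Finset.subset_univ T) hT
    · obtain ⟨T, _, hTa, hTc⟩ := exists_max_antichain (Finset.univ : Finset α)
      exact ⟨T, hTa, hTc⟩

end Aux

/-- For any finite poset, the minimum number of colors in a chain-proper
coloring that is also distinguishing equals the width of the poset. -/
theorem chainChiD_eq_width (α : Type*) [PartialOrder α] [Fintype α] :
    chainChiD α = posetWidth α := by
  classical
  set w := posetWidth α with hw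
  obtain ⟨c, hclt, hcchain⟩ := dilworth (Finset.univ : Finset α)
  have hcw : ∀ x, c x < w := by
    intro x
    rw [hw, posetWidth_eq_wS]
    exact hclt x (Finset.mem_univ x)
  set c' : α → Fin w := fun x => ⟨c x, hcw x⟩ with hc'
  have hc'chain : ∀ x y : α, c' x = c' y → x ≤ y ∨ y ≤ x := by
    intro x y h
    have : c x = c y := congrArg Fin.val h
    exact hcchain x (Finset.mem_univ x) y (Finset.mem_univ y) this
  have hdist : IsDistinguishing c' := by
    intro φ hφ x
    have hcφ : ∀ z, c (φ z) = c z := fun z => congrArg Fin.val (hφ z)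
    set D : α → Finset α := fun z => Finset.univ.filter (fun y => c y = c z ∧ y ≤ z) with hD
    have himg : ∀ z, (D z).image φ = D (φ z) := by
      intro z
      ext u
      simp only [hD, Finset.mem_image, Finset.mem_filter, Finset.mem_univ, true_and]
      constructor
      · rintro ⟨y, ⟨hcy, hyz⟩, rfl⟩
        exact ⟨(hcφ y).trans (hcy.trans (hcφ z).symm), φ.monotone hyz⟩
      · rintro ⟨hcu, huz⟩
        refine ⟨φ.symm u, ⟨?_, ?_⟩, φ.apply_symm_apply u⟩
        · have : c (φ (φ.symm u)) = c u := by rw [φ.apply_symm_apply]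
          rw [← hcφ (φ.symm u), this, hcu, hcφ z]
        · have := φ.symm.monotone huz
          simpa using this
    have hcards : ∀ z, (D z).card = (D (φ z)).card := by
      intro z
      rw [← himg z, Finset.card_image_of_injective _ φ.injective]
    have hcomp : φ x ≤ x ∨ x ≤ φ x :=
      hcchain (φ x) (Finset.mem_univ _) x (Finset.mem_univ _) (hcφ x)
    by_contra hne
    rcases hcomp with h | h
    · -- φ x < x, so D (φ x) ⊊ D x
      have hlt : φ x < x := lt_of_le_of_ne h hne
      have hsub : D (φ x) ⊆ D x := by
        intro y hy
        simp only [hD, Finset.mem_filter, Finset.mem_univ, true_and] at hy ⊢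
        exact ⟨hy.1.trans (hcφ x), hy.2.trans h⟩
      have hxmem : x ∈ D x := by
        simp [hD]
      have hxnmem : x ∉ D (φ x) := by
        simp only [hD, Finset.mem_filter, Finset.mem_univ, true_and, not_and]
        intro _
        exact fun hxle => hne (le_antisymm h hxle)
      have h1 := Finset.card_lt_card (Finset.ssubset_iff_of_subset hsub |>.2 ⟨x, hxmem, hxnmem⟩)
      have h2 := hcards x
      omega
    · have hlt : x < φ x := lt_of_le_of_ne h (fun h' => hne h'.symm)
      have hsub : D x ⊆ D (φ x) := by
        intro y hy
        simp only [hD, Finset.mem_filter, Finset.mem_univ, true_and] at hy ⊢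
        exact ⟨hy.1.trans (hcφ x).symm, hy.2.trans h⟩
      have hxmem : φ x ∈ D (φ x) := by
        simp [hD]
      have hxnmem : φ x ∉ D x := by
        simp only [hD, Finset.mem_filter, Finset.mem_univ, true_and, not_and]
        intro _
        exact fun hxle => hne (le_antisymm hxle h)
      have h1 := Finset.card_lt_card (Finset.ssubset_iff_of_subset hsub |>.2 ⟨φ x, hxmem, hxnmem⟩)
      have h2 := hcards x
      omega
  have hmem : w ∈ {k | ∃ c : α → Fin k, (∀ x y : α, c x = c y → x ≤ y ∨ y ≤ x) ∧
      IsDistinguishing c} := ⟨c', hc'chain, hdist⟩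
  apply le_antisymm
  · exact Nat.sInf_le hmem
  · apply le_csInf ⟨w, hmem⟩
    rintro k ⟨d, hdch, -⟩
    obtain ⟨T, _, hTa, hTc⟩ := exists_max_antichain (Finset.univ : Finset α)
    rw [hw, posetWidth_eq_wS, ← hTc]
    have hinj : Set.InjOn d (T : Set α) := by
      intro x hx y hy hxy
      by_contra hne2
      rcases hdch x y hxy with h | h
      · exact hTa hx hy hne2 h
      · exact hTa hy hx (Ne.symm hne2) h
    calc T.card = (T.image d).card := (Finset.card_image_of_injOn hinj).symm
      _ ≤ Fintype.card (Fin k) := Finset.card_le_univ _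
      _ = k := Fintype.card_fin k
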